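/- arXiv:1312.1704 — 6 statements merged into one kernel-verified Lean document; each statement's English description precedes it below -/
import Mathlib

section
/- If all bonding maps of an inverse system of continua are monotone surjections, then the projections from the inverse limit are monotone. -/
/-- A directed intersection of nonempty compact connected sets in a T2 space
is connected. -/
theorem aux_directed_iInter_isConnected {α : Type*} [TopologicalSpace α] [T2Space α]
    {J : Type*} [Nonempty J] {K : J → Set α}
    (hd : Directed (· ⊇ ·) K)
    (hK : ∀ j, IsConnected (K j)) (hc : ∀ j, IsCompact (K j)) :
    IsConnected (⋂ j, K j) := by
  have hcl : ∀ j, IsClosed (K j) := fun j => (hc j).isClosed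
  have hne : (⋂ j, K j).Nonempty :=
    IsCompact.nonempty_iInter_of_directed_nonempty_isCompact_isClosed K hd
      (fun j => (hK j).nonempty) hc hcl
  refine ⟨hne, ?_⟩
  have hScl : IsClosed (⋂ j, K j) := isClosed_iInter hcl
  have hScpt : IsCompact (⋂ j, K j) :=
    (hc (Classical.arbitrary J)).of_isClosed_subset hScl
      (Set.iInter_subset _ _)
  rw [isPreconnected_iff_subset_of_fully_disjoint_closed hScl]
  intro u v hu hv hsub hdisj
  set S := ⋂ j, K j with hS
  rcases Set.eq_empty_or_nonempty (S ∩ u) with hA | hA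
  · right
    intro x hx
    rcases hsub hx with h | h
    · have hxu : x ∈ S ∩ u := ⟨hx, h⟩
      rw [hA] at hxu
      exact hxu.elim
    · exact h
  rcases Set.eq_empty_or_nonempty (S ∩ v) with hB | hB
  · left
    intro x hx
    rcases hsub hx with h | h
    · exact h
    · have hxv : x ∈ S ∩ v := ⟨hx, h⟩
      rw [hB] at hxv
      exact hxv.elim
  exfalso
  -- separate the compact disjoint sets S ∩ u and S ∩ v
  have hAcpt : IsCompact (S ∩ u) := hScpt.inter_right hu
  have hBcpt : IsCompact (S ∩ v) := hScpt.inter_right hv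
  have hABdisj : Disjoint (S ∩ u) (S ∩ v) :=
    Disjoint.mono Set.inter_subset_right Set.inter_subset_right hdisj
  obtain ⟨U, V, hUo, hVo, hAU, hBV, hUV⟩ :=
    SeparatedNhds.of_isCompact_isCompact hAcpt hBcpt hABdisj
  -- the directed family K j \ (U ∪ V) has empty intersection
  have hempty : (⋂ j, K j \ (U ∪ V)) = ∅ := by
    apply Set.eq_empty_of_subset_empty
    intro x hx
    simp only [Set.mem_iInter, Set.mem_diff] at hx
    have hxS : x ∈ S := Set.mem_iInter.mpr fun j => (hx j).1
    refine absurd ?_ (hx (Classical.arbitrary J)).2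
    rcases hsub hxS with h | h
    · exact Or.inl (hAU ⟨hxS, h⟩)
    · exact Or.inr (hBV ⟨hxS, h⟩)
  have : ¬ ∀ j, (K j \ (U ∪ V)).Nonempty := by
    intro hall
    have := IsCompact.nonempty_iInter_of_directed_nonempty_isCompact_isClosed
      (fun j => K j \ (U ∪ V))
      (fun j k => by
        obtain ⟨l, hlj, hlk⟩ := hd j k
        exact ⟨l, Set.diff_subset_diff_left hlj, Set.diff_subset_diff_left hlk⟩)
      hall
      (fun j => (hc j).diff (hUo.union hVo))
      (fun j => (hcl j).sdiff (hUo.union hVo))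
    rw [hempty] at this
    exact this.ne_empty rfl
  push_neg at this
  obtain ⟨j, hj⟩ := this
  rw [Set.diff_eq_empty] at hj
  -- K j is connected, contained in U ∪ V, meets both U and V: contradiction
  have hmeetsU : (K j ∩ U).Nonempty := by
    obtain ⟨x, hxS, hxu⟩ := hA
    exact ⟨x, Set.mem_iInter.mp hxS j, hAU ⟨hxS, hxu⟩⟩
  have hmeetsV : (K j ∩ V).Nonempty := by
    obtain ⟨x, hxS, hxv⟩ := hB
    exact ⟨x, Set.mem_iInter.mp hxS j, hBV ⟨hxS, hxv⟩⟩
  obtain ⟨x, -, hxU, hxV⟩ := (hK j).isPreconnected U V hUo hVo hj hmeetsU hmeetsV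
  exact hUV.ne_of_mem hxU hxV rfl

/-- If all bonding maps of an inverse system of continua are monotone surjections,
then the projections from the inverse limit are monotone: each fiber of a
projection is connected. -/
theorem stmt10 (ι : Type*) [Preorder ι] [IsDirected ι (· ≤ ·)] [Nonempty ι]
    (X : ι → Type*) [∀ i, TopologicalSpace (X i)] [∀ i, T2Space (X i)]
    [∀ i, CompactSpace (X i)] [∀ i, Nonempty (X i)] [∀ i, ConnectedSpace (X i)]
    (f : ∀ i j : ι, i ≤ j → X j → X i)
    (hcont : ∀ (i j : ι) (h : i ≤ j), Continuous (f i j h))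
    (hid : ∀ i : ι, f i i le_rfl = id)
    (hcomp : ∀ (i j k : ι) (hij : i ≤ j) (hjk : j ≤ k),
      f i k (hij.trans hjk) = f i j hij ∘ f j k hjk)
    (hsurj : ∀ (i j : ι) (h : i ≤ j), Function.Surjective (f i j h))
    (hmono : ∀ (i j : ι) (h : i ≤ j) (a : X i), IsConnected (f i j h ⁻¹' {a})) :
    ∀ (i : ι) (a : X i),
      IsConnected {x : ∀ j, X j |
        (∀ (j k : ι) (h : j ≤ k), x j = f j k h (x k)) ∧ x i = a} := by
  classical
  intro i a
  set J := {j : ι // i ≤ j} with hJ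
  haveI : Nonempty J := ⟨⟨i, le_rfl⟩⟩
  -- the sets C j for j ≥ i
  set C : J → Set (∀ k, X k) := fun j =>
    {x | (∀ k (h : k ≤ j.1), x k = f k j.1 h (x j.1)) ∧ f i j.1 j.2 (x j.1) = a}
    with hC
  -- C j is the image of (fiber over a) × (whole product) under a continuous map
  have himg : ∀ j : J, C j =
      (fun p : X j.1 × (∀ k, X k) => fun k =>
        if h : k ≤ j.1 then f k j.1 h p.1 else p.2 k) ''
      ((f i j.1 j.2 ⁻¹' {a}) ×ˢ Set.univ) := by
    intro j
    ext x
    constructor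
    · rintro ⟨hx1, hx2⟩
      refine ⟨(x j.1, x), ⟨hx2, trivial⟩, ?_⟩
      funext k
      by_cases h : k ≤ j.1
      · simp [h, ← hx1 k h]
      · simp [h]
    · rintro ⟨⟨b, y⟩, ⟨hb, -⟩, rfl⟩
      have hxj : (if h : j.1 ≤ j.1 then f j.1 j.1 h b else y j.1) = b := by
        simp [hid j.1]
      constructor
      · intro k h
        simp only [h, dif_pos, hxj]
      · show f i j.1 j.2 (if h : j.1 ≤ j.1 then f j.1 j.1 h b else y j.1) = a
        rw [hxj]; exact hb
  have hconn : ∀ j : J, IsConnected (C j) := by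
    intro j
    rw [himg j]
    apply IsConnected.image
    · exact (hmono i j.1 j.2 a).prod ⟨⟨Classical.arbitrary _, trivial⟩,
        isPreconnected_univ⟩
    · apply Continuous.continuousOn
      apply continuous_pi
      intro k
      by_cases h : k ≤ j.1
      · simp only [h, dif_pos]
        exact (hcont k j.1 h).comp continuous_fst
      · simp only [h, dif_neg, not_false_iff]
        exact (continuous_apply k).comp continuous_snd
  have hclosed : ∀ j : J, IsClosed (C j) := by
    intro j
    have h1 : IsClosed {x : ∀ k, X k | ∀ k (h : k ≤ j.1), x k = f k j.1 h (x j.1)} := by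
      have : {x : ∀ k, X k | ∀ k (h : k ≤ j.1), x k = f k j.1 h (x j.1)} =
          ⋂ k, ⋂ (h : k ≤ j.1), {x | x k = f k j.1 h (x j.1)} := by
        ext x; simp [Set.mem_iInter]
      rw [this]
      exact isClosed_iInter fun k => isClosed_iInter fun h =>
        isClosed_eq (continuous_apply k) ((hcont k j.1 h).comp (continuous_apply j.1))
    have h2 : IsClosed {x : ∀ k, X k | f i j.1 j.2 (x j.1) = a} :=
      isClosed_eq ((hcont i j.1 j.2).comp (continuous_apply j.1)) continuous_const
    exact h1.inter h2
  have hcpt : ∀ j : J, IsCompact (C j) := fun j => (hclosed j).isCompact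
  -- antitone: if j ≤ k then C k ⊆ C j
  have hanti : ∀ j k : J, j.1 ≤ k.1 → C k ⊆ C j := by
    rintro j k hjk x ⟨hx1, hx2⟩
    have hxj : x j.1 = f j.1 k.1 hjk (x k.1) := hx1 j.1 hjk
    constructor
    · intro l hl
      calc x l = f l k.1 (hl.trans hjk) (x k.1) := hx1 l (hl.trans hjk)
        _ = f l j.1 hl (f j.1 k.1 hjk (x k.1)) := by rw [hcomp l j.1 k.1 hl hjk]; rfl
        _ = f l j.1 hl (x j.1) := by rw [hxj]
    · calc f i j.1 j.2 (x j.1) = f i j.1 j.2 (f j.1 k.1 hjk (x k.1)) := by rw [hxj]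
        _ = f i k.1 (j.2.trans hjk) (x k.1) := by rw [hcomp i j.1 k.1 j.2 hjk]; rfl
        _ = a := hx2
  have hdir : Directed (· ⊇ ·) C := by
    intro j k
    obtain ⟨l, hjl, hkl⟩ := directed_of (· ≤ ·) j.1 k.1
    exact ⟨⟨l, j.2.trans hjl⟩, hanti j ⟨l, _⟩ hjl, hanti k ⟨l, _⟩ hkl⟩
  -- the fiber equals the intersection
  have hiInter : {x : ∀ j, X j |
      (∀ (j k : ι) (h : j ≤ k), x j = f j k h (x k)) ∧ x i = a} = ⋂ j, C j := by
    ext x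
    simp only [Set.mem_iInter, Set.mem_setOf_eq]
    constructor
    · rintro ⟨hx1, hx2⟩ j
      exact ⟨fun k h => hx1 k j.1 h, by rw [← hx1 i j.1 j.2, hx2]⟩
    · intro h
      constructor
      · intro j k hjk
        obtain ⟨m, hkm, him⟩ := directed_of (· ≤ ·) k i
        have hm := h ⟨m, him⟩
        calc x j = f j m (hjk.trans hkm) (x m) := hm.1 j (hjk.trans hkm)
          _ = f j k hjk (f k m hkm (x m)) := by rw [hcomp j k m hjk hkm]; rfl
          _ = f j k hjk (x k) := by rw [← hm.1 k hkm]
      · have := (h ⟨i, le_rfl⟩).2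
        rwa [hid i] at this
  rw [hiInter]
  exact aux_directed_iInter_isConnected hdir hconn hcpt
end

section
/- A continuous surjection from a compact metric space onto a hereditarily indecomposable continuum is confluent. -/
open Set

/-- In a compact Hausdorff space, a closed set disjoint from the connected component of a
point can be separated from that point by a clopen set. -/
lemma aux_clopen_sep {α : Type*} [TopologicalSpace α] [CompactSpace α] [T2Space α]
    (x : α) {K : Set α} (hK : IsClosed K) (hd : K ∩ connectedComponent x = ∅) :
    ∃ Z : Set α, IsClopen Z ∧ x ∈ Z ∧ K ∩ Z = ∅ := by
  rw [connectedComponent_eq_iInter_isClopen] at hd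
  obtain ⟨u, hu⟩ := hK.isCompact.elim_finite_subfamily_closed
    (fun s : { s : Set α // IsClopen s ∧ x ∈ s } => (s : Set α)) (fun s => s.2.1.1) hd
  exact ⟨⋂ i ∈ u, (i : Set α), isClopen_biInter_finset fun i _ => i.2.1,
    mem_iInter₂.mpr fun i _ => i.2.2, hu⟩

/-- Relative version: for a compact set `F` in a Hausdorff space and a closed set `K` disjoint
from the connected component of `x` in `F`, there is a relatively clopen subset `V` of `F`
containing that component and disjoint from `K`. -/
lemma aux_rel_sep {X : Type*} [TopologicalSpace X] [T2Space X] {F K : Set X}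
    (hF : IsCompact F) (hK : IsClosed K) {x : X} (hx : x ∈ F)
    (hd : K ∩ connectedComponentIn F x = ∅) :
    ∃ V O : Set X, IsOpen O ∧ V = F ∩ O ∧ IsClosed V ∧
      connectedComponentIn F x ⊆ V ∧ K ∩ V = ∅ := by
  haveI : CompactSpace F := isCompact_iff_compactSpace.mp hF
  set x' : F := ⟨x, hx⟩
  have hK' : IsClosed ((↑) ⁻¹' K : Set F) := hK.preimage continuous_subtype_val
  have hd' : ((↑) ⁻¹' K : Set F) ∩ connectedComponent x' = ∅ := by
    rw [eq_empty_iff_forall_notMem]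
    rintro z ⟨hz1, hz2⟩
    have : (z : X) ∈ K ∩ connectedComponentIn F x := by
      refine ⟨hz1, ?_⟩
      rw [connectedComponentIn_eq_image hx]
      exact mem_image_of_mem _ hz2
    rw [hd] at this
    exact this
  obtain ⟨Z, hZ, hxZ, hZK⟩ := aux_clopen_sep x' hK' hd'
  obtain ⟨O, hO, hOZ⟩ := isOpen_induced_iff.mp hZ.2
  refine ⟨(↑) '' Z, O, hO, ?_, ?_, ?_, ?_⟩
  · rw [← hOZ, Subtype.image_preimage_coe]
  · exact ((hZ.1.isCompact).image continuous_subtype_val).isClosed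
  · rw [connectedComponentIn_eq_image hx]
    exact image_mono (hZ.connectedComponent_subset hxZ)
  · rw [eq_empty_iff_forall_notMem]
    rintro z ⟨hz1, z', hz', rfl⟩
    have : z' ∈ ((↑) ⁻¹' K : Set F) ∩ Z := ⟨hz1, hz'⟩
    rw [hZK] at this
    exact this

/-- A space is hereditarily indecomposable if no subcontinuum of it is the union of
two proper subcontinua. -/
def HerIndec (Y : Type*) [TopologicalSpace Y] : Prop :=
  ∀ A : Set Y, IsCompact A → IsConnected A →
    ¬ ∃ B C : Set Y, IsCompact B ∧ IsConnected B ∧ IsCompact C ∧ IsConnected C ∧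
        B ∪ C = A ∧ B ≠ A ∧ C ≠ A

/-- A continuous surjection from a compact metric continuum onto a hereditarily
indecomposable continuum is confluent: the image of each connected component of the
preimage of a subcontinuum is the whole subcontinuum. -/
theorem stmt11 (X Y : Type*) [MetricSpace X] [CompactSpace X] [ConnectedSpace X]
    [Nonempty X] [TopologicalSpace Y] [T2Space Y] [CompactSpace Y]
    [ConnectedSpace Y] [Nonempty Y] (hHI : HerIndec Y)
    (f : X → Y) (hf : Continuous f) (hsurj : Function.Surjective f) :
    ∀ A : Set Y, IsCompact A → IsConnected A →
      ∀ x ∈ f ⁻¹' A, f '' connectedComponentIn (f ⁻¹' A) x = A := by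
  intro A hA hAc x hx
  set F := f ⁻¹' A with hF
  set Q := connectedComponentIn F x with hQdef
  have hFclosed : IsClosed F := hA.isClosed.preimage hf
  have hFcpt : IsCompact F := hFclosed.isCompact
  have hQsub : Q ⊆ F := connectedComponentIn_subset F x
  have himg : f '' Q ⊆ A := by rintro _ ⟨q, hq, rfl⟩; exact hQsub hq
  refine Set.Subset.antisymm himg ?_
  by_contra hne
  obtain ⟨a, haA, haQ⟩ : ∃ a ∈ A, a ∉ f '' Q := by
    rcases Set.not_subset.mp hne with ⟨a, haA, h⟩; exact ⟨a, haA, h⟩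
  -- Step 1: a relatively clopen compact `V ⊆ F` containing `Q` with `a ∉ f '' V`.
  have hd1 : (f ⁻¹' {a}) ∩ Q = ∅ := by
    rw [eq_empty_iff_forall_notMem]
    rintro q ⟨hq1, hq2⟩
    exact haQ ⟨q, hq2, hq1⟩
  obtain ⟨V, O, hO, hVO, hVcl, hQV, hVK⟩ :=
    aux_rel_sep hFcpt (isClosed_singleton.preimage hf) hx hd1
  have haV : ∀ v ∈ V, f v ≠ a := by
    intro v hv hva
    have : v ∈ (f ⁻¹' {a}) ∩ V := ⟨by simp [hva], hv⟩
    rw [hVK] at this; exact this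
  obtain ⟨p, hp⟩ := hsurj a
  have hpF : p ∈ F := by simp [hF, Set.mem_preimage, hp, haA]
  have hpV : p ∉ V := fun h => haV p h hp
  -- Step 2: a nice open neighbourhood `W` of `V`.
  have hFVcl : IsClosed (F \ V) := by
    have : F \ V = F ∩ Oᶜ := by
      rw [hVO, Set.diff_eq, Set.compl_inter]
      ext z; constructor
      · rintro ⟨hz, h2⟩
        rcases h2 with h2 | h2
        · exact absurd hz h2
        · exact ⟨hz, h2⟩
      · rintro ⟨hz, h2⟩; exact ⟨hz, Or.inr h2⟩
    rw [this]; exact hFclosed.inter (isClosed_compl_iff.mpr hO)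
  have hVsubcompl : V ⊆ (F \ V)ᶜ := fun z hz hz' => hz'.2 hz
  obtain ⟨U, hUopen, hVU, hclU⟩ :=
    normal_exists_closure_subset hVcl (hFVcl.isOpen_compl) hVsubcompl
  set W := O ∩ U with hWdef
  have hWopen : IsOpen W := hO.inter hUopen
  have hVW : V ⊆ W := Set.subset_inter (by rw [hVO]; exact Set.inter_subset_right) hVU
  have hclWF : closure W ∩ F ⊆ V := by
    rintro z ⟨hz1, hz2⟩
    have hzU : z ∈ closure U := closure_mono Set.inter_subset_right hz1
    have : z ∉ F \ V := fun h => (hclU hzU) h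
    by_contra hzV
    exact this ⟨hz2, hzV⟩
  have hpW : p ∉ closure W := by
    intro h
    exact (hclU (closure_mono Set.inter_subset_right h)) ⟨hpF, hpV⟩
  have hxW : x ∈ W := hVW (hQV (mem_connectedComponentIn hx))
  have hxclW : x ∈ closure W := subset_closure hxW
  have hclWcpt : IsCompact (closure W) := isClosed_closure.isCompact
  -- Step 3: boundary bumping for the component `C` of `x` in `closure W`.
  set C := connectedComponentIn (closure W) x with hCdef
  have hCsub : C ⊆ closure W := connectedComponentIn_subset _ _
  have hCcon : IsConnected C := isConnected_connectedComponentIn_iff.mpr hxclW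
  have hCcpt : IsCompact C := by
    rw [hCdef, connectedComponentIn_eq_image hxclW]
    haveI : CompactSpace (closure W) := isCompact_iff_compactSpace.mp hclWcpt
    exact isClosed_connectedComponent.isCompact.image continuous_subtype_val
  have hbump : ∃ q ∈ C, q ∉ W := by
    by_contra h
    push_neg at h
    have hfrcl : IsClosed (closure W \ W) := by
      rw [Set.diff_eq]; exact isClosed_closure.inter (isClosed_compl_iff.mpr hWopen)
    have hd2 : (closure W \ W) ∩ C = ∅ := by
      rw [eq_empty_iff_forall_notMem]
      rintro z ⟨hz1, hz2⟩
      exact hz1.2 (h z hz2)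
    obtain ⟨V₂, O₂, hO₂, hV₂O, hV₂cl, hCV₂, hV₂K⟩ := aux_rel_sep hclWcpt hfrcl hxclW hd2
    have hV₂W : V₂ ⊆ W := by
      intro z hz
      by_contra hzw
      have : z ∈ (closure W \ W) ∩ V₂ := ⟨⟨(hV₂O ▸ hz).1, hzw⟩, hz⟩
      rw [hV₂K] at this; exact this
    have hV₂eq : V₂ = W ∩ O₂ := by
      apply Set.Subset.antisymm
      · exact Set.subset_inter hV₂W (fun z hz => (hV₂O ▸ hz).2)
      · rw [hV₂O]; exact Set.inter_subset_inter_left _ subset_closure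
    have hV₂open : IsOpen V₂ := hV₂eq ▸ hWopen.inter hO₂
    have hxV₂ : x ∈ V₂ := hCV₂ (mem_connectedComponentIn hxclW)
    have : V₂ = Set.univ := by
      rcases isClopen_iff.mp ⟨hV₂cl, hV₂open⟩ with h | h
      · rw [h] at hxV₂; exact absurd hxV₂ (Set.notMem_empty x)
      · exact h
    have hpV₂ : p ∈ V₂ := this ▸ Set.mem_univ p
    exact hpW ((hV₂O ▸ hpV₂).1)
  obtain ⟨q, hqC, hqW⟩ := hbump
  -- Step 4: apply hereditary indecomposability to `f '' C ∪ A`.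
  have hfxC : f x ∈ f '' C := mem_image_of_mem f (mem_connectedComponentIn hxclW)
  have hfCcon : IsConnected (f '' C) := hCcon.image f hf.continuousOn
  have hfCcpt : IsCompact (f '' C) := hCcpt.image hf
  have hDcon : IsConnected (f '' C ∪ A) :=
    IsConnected.union ⟨f x, hfxC, hx⟩ hfCcon hAc
  have hDcpt : IsCompact (f '' C ∪ A) := hfCcpt.union hA
  have hcases : f '' C = f '' C ∪ A ∨ A = f '' C ∪ A := by
    by_contra hcon
    push_neg at hcon
    exact hHI (f '' C ∪ A) hDcpt hDcon
      ⟨f '' C, A, hfCcpt, hfCcon, hA, hAc, rfl, hcon.1, hcon.2⟩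
  rcases hcases with hcase | hcase
  · -- `A ⊆ f '' C`, so some `c ∈ C` has `f c = a`; but then `c ∈ V`, contradiction.
    have haC : a ∈ f '' C := by rw [hcase]; exact Or.inr haA
    obtain ⟨c, hcC, hca⟩ := haC
    have hcF : c ∈ F := by simp [hF, Set.mem_preimage, hca, haA]
    have : c ∈ V := hclWF ⟨hCsub hcC, hcF⟩
    exact haV c this hca
  · -- `f '' C ⊆ A`, so `C ⊆ F`; but then `q ∈ V ⊆ W`, contradiction.
    have hfCA : f '' C ⊆ A := by rw [hcase]; exact Set.subset_union_left
    have hqF : q ∈ F := hfCA (mem_image_of_mem f hqC)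
    exact hqW (hVW (hclWF ⟨hCsub hqC, hqF⟩))
end

section
/- The inverse limit of an inverse sequence of hereditarily indecomposable continua with surjective bonding maps is hereditarily indecomposable. -/
open Set

/-- The intersection of a directed family of nonempty compact preconnected sets in a
Hausdorff space is preconnected. -/
lemma isPreconnected_iInter_of_directed {α : Type*} [TopologicalSpace α] [T2Space α]
    {ι : Type*} [Nonempty ι] (S : ι → Set α) (hd : Directed (· ⊇ ·) S)
    (hn : ∀ i, (S i).Nonempty) (hc : ∀ i, IsCompact (S i))
    (hconn : ∀ i, IsPreconnected (S i)) : IsPreconnected (⋂ i, S i) := by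
  have hcl : ∀ i, IsClosed (S i) := fun i => (hc i).isClosed
  set K := ⋂ i, S i with hK
  have hKsub : ∀ i, K ⊆ S i := fun i => iInter_subset _ _
  have hKclosed : IsClosed K := isClosed_iInter hcl
  have hKc : IsCompact K :=
    (hc (Classical.arbitrary ι)).of_isClosed_subset hKclosed (hKsub _)
  by_contra hnp
  rw [IsPreconnected] at hnp
  push_neg at hnp
  obtain ⟨U, V, hU, hV, hKUV, hKU, hKV, hdisj⟩ := hnp
  set A := K \ U with hA
  set B := K \ V with hB
  have hAc : IsCompact A := hKc.diff hU
  have hBc : IsCompact B := hKc.diff hV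
  have hABdisj : Disjoint A B := by
    rw [Set.disjoint_left]
    rintro x ⟨hxK, hxU⟩ ⟨-, hxV⟩
    rcases hKUV hxK with h | h
    exacts [hxU h, hxV h]
  have hAne : A.Nonempty := by
    obtain ⟨x, hxK, hxV⟩ := hKV
    refine ⟨x, hxK, fun hxU => ?_⟩
    have : x ∈ K ∩ (U ∩ V) := ⟨hxK, hxU, hxV⟩
    rw [hdisj] at this; exact this
  have hBne : B.Nonempty := by
    obtain ⟨x, hxK, hxU⟩ := hKU
    refine ⟨x, hxK, fun hxV => ?_⟩
    have : x ∈ K ∩ (U ∩ V) := ⟨hxK, hxU, hxV⟩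
    rw [hdisj] at this; exact this
  obtain ⟨U', V', hU', hV', hAU', hBV', hUV'⟩ :=
    SeparatedNhds.of_isCompact_isCompact hAc hBc hABdisj
  have hKsub' : K ⊆ U' ∪ V' := by
    intro x hxK
    by_cases hxU : x ∈ U
    · have hxV : x ∉ V := fun hxV => by
        have : x ∈ K ∩ (U ∩ V) := ⟨hxK, hxU, hxV⟩
        rw [hdisj] at this; exact this
      exact Or.inr (hBV' ⟨hxK, hxV⟩)
    · exact Or.inl (hAU' ⟨hxK, hxU⟩)
  -- some S i is contained in U' ∪ V'
  have hex : ∃ i, S i ⊆ U' ∪ V' := by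
    by_contra hno
    push_neg at hno
    have : (⋂ i, S i \ (U' ∪ V')).Nonempty := by
      refine IsCompact.nonempty_iInter_of_directed_nonempty_isCompact_isClosed _
        (fun i j => ?_) (fun i => ?_) (fun i => (hc i).diff (hU'.union hV'))
        (fun i => (hcl i).sdiff (hU'.union hV'))
      · obtain ⟨k, hk1, hk2⟩ := hd i j
        exact ⟨k, diff_subset_diff_left hk1, diff_subset_diff_left hk2⟩
      · obtain ⟨x, hx1, hx2⟩ := not_subset.mp (hno i)
        exact ⟨x, hx1, hx2⟩
    obtain ⟨x, hx⟩ := this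
    simp only [mem_iInter, mem_diff] at hx
    exact (hx (Classical.arbitrary ι)).2 (hKsub' (mem_iInter.mpr fun i => (hx i).1))
  obtain ⟨i, hi⟩ := hex
  have h1 : (S i ∩ U').Nonempty := hAne.mono (subset_inter ((hA ▸ diff_subset).trans (hKsub i)) hAU')
  have h2 : (S i ∩ V').Nonempty := hBne.mono (subset_inter ((hB ▸ diff_subset).trans (hKsub i)) hBV')
  obtain ⟨x, -, hx⟩ := hconn i U' V' hU' hV' hi h1 h2
  exact hUV'.le_bot hx

/-- The inverse limit of an inverse system of hereditarily indecomposable continua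
with surjective bonding maps is a hereditarily indecomposable continuum. -/
theorem stmt13 (ι : Type*) [Preorder ι] [IsDirected ι (· ≤ ·)] [Nonempty ι]
    (X : ι → Type*) [∀ i, TopologicalSpace (X i)] [∀ i, T2Space (X i)]
    [∀ i, CompactSpace (X i)] [∀ i, Nonempty (X i)] [∀ i, ConnectedSpace (X i)]
    (hHI : ∀ i, HerIndec (X i))
    (f : ∀ i j : ι, i ≤ j → X j → X i)
    (hcont : ∀ (i j : ι) (h : i ≤ j), Continuous (f i j h))
    (hid : ∀ i : ι, f i i le_rfl = id)
    (hcomp : ∀ (i j k : ι) (hij : i ≤ j) (hjk : j ≤ k),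
      f i k (hij.trans hjk) = f i j hij ∘ f j k hjk)
    (hsurj : ∀ (i j : ι) (h : i ≤ j), Function.Surjective (f i j h)) :
    Nonempty {x : ∀ i, X i // ∀ (i j : ι) (h : i ≤ j), x i = f i j h (x j)} ∧
    CompactSpace {x : ∀ i, X i // ∀ (i j : ι) (h : i ≤ j), x i = f i j h (x j)} ∧
    ConnectedSpace {x : ∀ i, X i // ∀ (i j : ι) (h : i ≤ j), x i = f i j h (x j)} ∧
    T2Space {x : ∀ i, X i // ∀ (i j : ι) (h : i ≤ j), x i = f i j h (x j)} ∧
    HerIndec {x : ∀ i, X i // ∀ (i j : ι) (h : i ≤ j), x i = f i j h (x j)} := by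
  classical
  set L : Set (∀ i, X i) := {x | ∀ (i j : ι) (h : i ≤ j), x i = f i j h (x j)} with hLdef
  -- partial coherence sets
  set S : ι → Set (∀ i, X i) := fun i => {x | ∀ j (h : j ≤ i), x j = f j i h (x i)} with hSdef
  have hLS : L = ⋂ i, S i := by
    ext x
    simp only [hLdef, hSdef, mem_iInter, mem_setOf_eq]
    exact ⟨fun h i j hj => h j i hj, fun h i j hij => h j i hij⟩
  -- S i is the range of a continuous retraction
  set g : ∀ i, (∀ j, X j) → (∀ j, X j) :=
    fun i x j => if h : j ≤ i then f j i h (x i) else x j with hgdef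
  have hgcont : ∀ i, Continuous (g i) := by
    intro i
    refine continuous_pi fun j => ?_
    by_cases h : j ≤ i <;> simp only [hgdef, h, dif_pos, dif_neg, not_false_iff]
    · exact (hcont j i h).comp (continuous_apply i)
    · exact continuous_apply j
  have hgi : ∀ i x, g i x i = x i := by
    intro i x
    simp only [hgdef, dif_pos le_rfl, hid i, id]
  have hrange : ∀ i, S i = Set.range (g i) := by
    intro i
    ext x
    constructor
    · intro hx
      refine ⟨x, funext fun j => ?_⟩
      by_cases h : j ≤ i
      · simp only [hgdef, dif_pos h]; exact (hx j h).symm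
      · simp only [hgdef, dif_neg h]
    · rintro ⟨y, rfl⟩ j h
      simp only [hgdef, dif_pos h, dif_pos le_rfl, hid i, id]
  have hScomp : ∀ i, IsCompact (S i) := fun i => hrange i ▸ isCompact_range (hgcont i)
  have hSconn : ∀ i, IsPreconnected (S i) := fun i =>
    hrange i ▸ isPreconnected_range (hgcont i)
  have hSne : ∀ i, (S i).Nonempty := fun i =>
    hrange i ▸ Set.range_nonempty _
  have hScl : ∀ i, IsClosed (S i) := fun i => (hScomp i).isClosed
  have hSdir : Directed (· ⊇ ·) S := by
    intro i j
    obtain ⟨k, hik, hjk⟩ := directed_of (· ≤ ·) i j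
    have key : ∀ i', i' ≤ k → S k ⊆ S i' := by
      intro i' hi'k x hx j' hj'
      have h1 : x j' = f j' k (hj'.trans hi'k) (x k) := hx j' (hj'.trans hi'k)
      have h2 : x i' = f i' k hi'k (x k) := hx i' hi'k
      rw [h1, h2, hcomp j' i' k hj' hi'k, Function.comp_apply]
    exact ⟨k, key i hik, key j hjk⟩
  have hLcl : IsClosed L := hLS ▸ isClosed_iInter hScl
  have hLcomp : IsCompact L := (hScomp (Classical.arbitrary ι)).of_isClosed_subset hLcl
    (hLS ▸ iInter_subset _ _)
  have hLne : L.Nonempty := by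
    rw [hLS]
    exact IsCompact.nonempty_iInter_of_directed_nonempty_isCompact_isClosed S hSdir hSne
      hScomp hScl
  have hLpc : IsPreconnected L :=
    hLS ▸ isPreconnected_iInter_of_directed S hSdir hSne hScomp hSconn
  obtain ⟨x₀, hx₀⟩ := hLne
  refine ⟨⟨⟨x₀, hx₀⟩⟩, isCompact_iff_compactSpace.mp hLcomp,
    Subtype.connectedSpace ⟨⟨x₀, hx₀⟩, hLpc⟩, inferInstance, ?_⟩
  -- hereditary indecomposability
  set T := {x : ∀ i, X i // ∀ (i j : ι) (h : i ≤ j), x i = f i j h (x j)} with hTdef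
  haveI : CompactSpace T := isCompact_iff_compactSpace.mp hLcomp
  set π : ∀ i, T → X i := fun i x => x.1 i with hπdef
  have hπcont : ∀ i, Continuous (π i) := fun i =>
    (continuous_apply i).comp continuous_subtype_val
  -- key separation lemma
  have key : ∀ (C : Set T) (b : T), IsCompact C → b ∉ C → ∃ i, π i b ∉ π i '' C := by
    intro C b hC hbC
    by_contra hno
    push_neg at hno
    set W : ι → Set T := fun i => C ∩ (π i) ⁻¹' {π i b} with hWdef
    have hWcl : ∀ i, IsClosed (W i) :=
      fun i => hC.isClosed.inter ((isClosed_singleton).preimage (hπcont i))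
    have hWc : ∀ i, IsCompact (W i) := fun i => hC.of_isClosed_subset (hWcl i) inter_subset_left
    have hWne : ∀ i, (W i).Nonempty := by
      intro i
      obtain ⟨y, hyC, hy⟩ := hno i
      exact ⟨y, hyC, hy⟩
    have hWdir : Directed (· ⊇ ·) W := by
      intro i j
      obtain ⟨k, hik, hjk⟩ := directed_of (· ≤ ·) i j
      have key' : ∀ i', i' ≤ k → W k ⊆ W i' := by
        rintro i' hi'k y ⟨hyC, hy⟩
        refine ⟨hyC, ?_⟩
        simp only [mem_preimage, mem_singleton_iff] at hy ⊢
        have h1 : y.1 i' = f i' k hi'k (y.1 k) := y.2 i' k hi'k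
        have h2 : b.1 i' = f i' k hi'k (b.1 k) := b.2 i' k hi'k
        simp only [hπdef] at hy ⊢
        rw [h1, h2, hy]
      exact ⟨k, key' i hik, key' j hjk⟩
    obtain ⟨y, hy⟩ :=
      IsCompact.nonempty_iInter_of_directed_nonempty_isCompact_isClosed W hWdir hWne hWc hWcl
    simp only [mem_iInter, hWdef, mem_inter_iff, mem_preimage, mem_singleton_iff] at hy
    have : y = b := Subtype.ext (funext fun i => (hy i).2)
    exact hbC (this ▸ (hy (Classical.arbitrary ι)).1)
  -- persistence upward
  have persist : ∀ (C : Set T) (b : T) (i k : ι), i ≤ k → π i b ∉ π i '' C →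
      π k b ∉ π k '' C := by
    rintro C b i k hik hnb ⟨y, hyC, hy⟩
    refine hnb ⟨y, hyC, ?_⟩
    have h1 : y.1 i = f i k hik (y.1 k) := y.2 i k hik
    have h2 : b.1 i = f i k hik (b.1 k) := b.2 i k hik
    simp only [hπdef] at hy ⊢
    rw [h1, h2, hy]
  rintro A hAc hAconn ⟨B, C, hBc, hBconn, hCc, hCconn, hBC, hBneq, hCneq⟩
  have hBsub : B ⊆ A := hBC ▸ subset_union_left
  have hCsub : C ⊆ A := hBC ▸ subset_union_right
  obtain ⟨b, hbA, hbC⟩ : ∃ b ∈ A, b ∉ C := by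
    by_contra h
    push_neg at h
    exact hCneq (Subset.antisymm hCsub h)
  obtain ⟨c, hcA, hcB⟩ : ∃ c ∈ A, c ∉ B := by
    by_contra h
    push_neg at h
    exact hBneq (Subset.antisymm hBsub h)
  have hbB : b ∈ B := by
    rcases (hBC ▸ hbA : b ∈ B ∪ C) with h | h
    · exact h
    · exact absurd h hbC
  have hcC : c ∈ C := by
    rcases (hBC ▸ hcA : c ∈ B ∪ C) with h | h
    · exact absurd h hcB
    · exact h
  obtain ⟨i₁, hi₁⟩ := key C b hCc hbC
  obtain ⟨i₂, hi₂⟩ := key B c hBc hcB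
  obtain ⟨k, hk₁, hk₂⟩ := directed_of (· ≤ ·) i₁ i₂
  have hb : π k b ∉ π k '' C := persist C b i₁ k hk₁ hi₁
  have hc : π k c ∉ π k '' B := persist B c i₂ k hk₂ hi₂
  refine hHI k (π k '' A) (hAc.image (hπcont k))
    (hAconn.image _ (hπcont k).continuousOn)
    ⟨π k '' B, π k '' C, hBc.image (hπcont k), hBconn.image _ (hπcont k).continuousOn,
      hCc.image (hπcont k), hCconn.image _ (hπcont k).continuousOn, ?_, ?_, ?_⟩
  · rw [← image_union, hBC]
  · intro h
    exact hc (h ▸ mem_image_of_mem (π k) hcA)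
  · intro h
    exact hb (h ▸ mem_image_of_mem (π k) hbA)
end

section
/- If X is a continuum admitting a Whitney map onto an arc (J, ⊲), then every long order arc in C(X) is order-isomorphic to (J, ⊲). -/
noncomputable section

variable (X : Type) [TopologicalSpace X]

/-- The Vietoris topology on the collection of all subsets of `X`, generated by the
sets `{A | A ⊆ U}` and `{A | A ∩ U ≠ ∅}` for `U` open. -/
def vietoris : TopologicalSpace (Set X) :=
  TopologicalSpace.generateFrom
    ({S | ∃ U : Set X, IsOpen U ∧ S = {A : Set X | A ⊆ U}} ∪
      {S | ∃ U : Set X, IsOpen U ∧ S = {A : Set X | (A ∩ U).Nonempty}})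

/-- The hyperspace of subcontinua of `X`. -/
def CX : Type := {A : Set X // IsCompact A ∧ IsConnected A}

/-- The hyperspace carries the (subspace) Vietoris topology. -/
instance : TopologicalSpace (CX X) := TopologicalSpace.induced Subtype.val (vietoris X)

/-- The hyperspace is partially ordered by inclusion. -/
instance : PartialOrder (CX X) :=
  inferInstanceAs (PartialOrder {A : Set X // IsCompact A ∧ IsConnected A})

/-- The singleton `{x}` as a subcontinuum. -/
def sgl (x : X) : CX X := ⟨{x}, isCompact_singleton, isConnected_singleton⟩

/-- The whole space as a subcontinuum. -/
def whole [CompactSpace X] [ConnectedSpace X] [Nonempty X] : CX X :=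
  ⟨Set.univ, isCompact_univ, isConnected_univ⟩

variable [CompactSpace X] [ConnectedSpace X] [Nonempty X]

/-- A long order arc in the hyperspace: a subcontinuum of `C(X)` linearly ordered by
inclusion containing the whole space and some singleton. -/
def IsLongOrderArc (𝒜 : Set (CX X)) : Prop :=
  IsCompact 𝒜 ∧ IsConnected 𝒜 ∧
    (∀ A ∈ 𝒜, ∀ B ∈ 𝒜, A.1 ⊆ B.1 ∨ B.1 ⊆ A.1) ∧
    (∃ x : X, sgl X x ∈ 𝒜) ∧ whole X ∈ 𝒜

/-- If `X` is a continuum admitting a Whitney map onto an arc `(J, ⊲)`, then the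
Whitney map restricts to an order isomorphism from any long order arc in `C(X)`
(ordered by strict inclusion) onto `(J, ⊲)`. -/
theorem stmt14 [T2Space X]
    (J : Type) [LinearOrder J] [TopologicalSpace J] [OrderTopology J]
    [CompactSpace J] [ConnectedSpace J]
    (jmin jmax : J) (hjmin : ∀ j : J, jmin ≤ j) (hjmax : ∀ j : J, j ≤ jmax)
    (μ : CX X → J) (hμcont : Continuous μ)
    (hμsgl : ∀ x : X, μ (sgl X x) = jmin)
    (hμmono : ∀ A B : CX X, A.1 ⊂ B.1 → μ A < μ B)
    (hμtop : μ (whole X) = jmax)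
    (𝒜 : Set (CX X)) (h𝒜 : IsLongOrderArc X 𝒜) :
    (∀ A ∈ 𝒜, ∀ B ∈ 𝒜, (A.1 ⊂ B.1 ↔ μ A < μ B)) ∧ μ '' 𝒜 = Set.univ := by
  obtain ⟨hcpt, hconn, hlin, ⟨x, hx⟩, hwhole⟩ := h𝒜
  constructor
  · intro A hA B hB
    constructor
    · exact hμmono A B
    · intro hlt
      rcases hlin A hA B hB with h | h
      · rcases Set.eq_or_ssubset_of_subset h with he | hs
        · exact absurd hlt (by rw [show A = B from Subtype.ext he]; exact lt_irrefl _)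
        · exact hs
      · rcases Set.eq_or_ssubset_of_subset h with he | hs
        · exact absurd hlt (by rw [show A = B from Subtype.ext he.symm]; exact lt_irrefl _)
        · exact absurd hlt (not_lt.mpr (le_of_lt (hμmono B A hs)))
  · have himg : IsPreconnected (μ '' 𝒜) :=
      (hconn.image μ hμcont.continuousOn).isPreconnected
    apply Set.eq_univ_of_univ_subset
    intro j _
    have h1 : jmin ∈ μ '' 𝒜 := ⟨sgl X x, hx, hμsgl x⟩
    have h2 : jmax ∈ μ '' 𝒜 := ⟨whole X, hwhole, hμtop⟩
    exact himg.Icc_subset h1 h2 ⟨hjmin j, hjmax j⟩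
end
end

section
/- A continuum admitting two long order arcs in its hyperspace that are not order-isomorphic admits no Whitney map. -/
noncomputable section

variable (X : Type) [TopologicalSpace X]

variable [CompactSpace X] [ConnectedSpace X] [Nonempty X]

/-- A continuum whose hyperspace contains two long order arcs that are not
order-isomorphic admits no Whitney map. -/
theorem stmt15 [T2Space X]
    (𝒜₀ 𝒜₁ : Set (CX X)) (h0 : IsLongOrderArc X 𝒜₀) (h1 : IsLongOrderArc X 𝒜₁)
    (hnotiso : IsEmpty (↥𝒜₀ ≃o ↥𝒜₁))
    (J : Type) [LinearOrder J] [TopologicalSpace J] [OrderTopology J]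
    [CompactSpace J] [ConnectedSpace J]
    (jmin jmax : J) (hjmin : ∀ j : J, jmin ≤ j) (hjmax : ∀ j : J, j ≤ jmax)
    (μ : CX X → J) :
    ¬ (Continuous μ ∧ (∀ x : X, μ (sgl X x) = jmin) ∧
        (∀ A B : CX X, A.1 ⊂ B.1 → μ A < μ B) ∧ μ (whole X) = jmax) := by
  rintro ⟨hc, hmin, hstrict, hmax⟩
  have key : ∀ 𝒜 : Set (CX X), IsLongOrderArc X 𝒜 → Nonempty (↥𝒜 ≃o J) := by
    rintro 𝒜 ⟨-, hconn, htot, ⟨x, hx⟩, hwhole⟩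
    set f : ↥𝒜 → J := fun a => μ a.1 with hf
    have hlt : ∀ a b : ↥𝒜, (a.1.1 : Set X) ⊆ b.1.1 → a ≠ b → f a < f b := by
      intro a b hab hne
      refine hstrict _ _ ⟨hab, fun h' => hne ?_⟩
      exact Subtype.ext (Subtype.ext (subset_antisymm hab h'))
    have hinj : Function.Injective f := by
      intro a b hab
      by_contra hne
      rcases htot a.1 a.2 b.1 b.2 with h | h
      · exact absurd hab (ne_of_lt (hlt a b h hne))
      · exact absurd hab.symm (ne_of_lt (hlt b a h (Ne.symm hne)))
    have hsurj : Function.Surjective f := by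
      intro j
      have himg : IsPreconnected (μ '' 𝒜) :=
        (hconn.image μ hc.continuousOn).isPreconnected
      have h1 : jmin ∈ μ '' 𝒜 := ⟨sgl X x, hx, hmin x⟩
      have h2 : jmax ∈ μ '' 𝒜 := ⟨whole X, hwhole, hmax⟩
      have hj : j ∈ μ '' 𝒜 := himg.ordConnected.out h1 h2 ⟨hjmin j, hjmax j⟩
      rcases hj with ⟨A, hA, hAj⟩
      exact ⟨⟨A, hA⟩, hAj⟩
    refine ⟨⟨Equiv.ofBijective f ⟨hinj, hsurj⟩, ?_⟩⟩
    intro a b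
    show f a ≤ f b ↔ a ≤ b
    constructor
    · intro hab
      rcases htot a.1 a.2 b.1 b.2 with h | h
      · exact h
      · rcases eq_or_ne b a with he | hne
        · exact le_of_eq he.symm
        · exact absurd hab (not_le_of_gt (hlt b a h hne))
    · intro hab
      rcases eq_or_ne a b with he | hne
      · exact le_of_eq (congrArg f he)
      · exact le_of_lt (hlt a b hab hne)
  obtain ⟨e₀⟩ := key 𝒜₀ h0
  obtain ⟨e₁⟩ := key 𝒜₁ h1
  exact hnotiso.false (e₀.trans e₁.symm)
end
end

section
/- In the hyperspace of a continuum, every maximal chain of subcontinua (under inclusion) from a singleton to the whole space that is closed in the Vietoris topology is an order arc: it is compact and connected. -/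
noncomputable section

variable (X : Type) [TopologicalSpace X]

variable [CompactSpace X] [ConnectedSpace X] [Nonempty X]

/-! ### Auxiliary material -/

open Set Filter TopologicalSpace Topology

variable {X}

lemma cx_le_iff {A B : CX X} : A ≤ B ↔ A.1 ⊆ B.1 := Iff.rfl

lemma cx_isOpen_iff {O : Set (CX X)} : IsOpen O ↔
    ∃ t, IsOpen[vietoris X] t ∧ Subtype.val ⁻¹' t = O := isOpen_induced_iff (t := vietoris X)

/-- The subbasis of the Vietoris topology. -/
def vbase : Set (Set (Set X)) :=
  {S | ∃ U : Set X, IsOpen U ∧ S = {A : Set X | A ⊆ U}} ∪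
    {S | ∃ U : Set X, IsOpen U ∧ S = {A : Set X | (A ∩ U).Nonempty}}

lemma vietoris_eq : vietoris X = TopologicalSpace.generateFrom (vbase (X := X)) := rfl

/-- Obtaining membership by maximality of the chain. -/
lemma mem_of_comparable {𝒜 : Set (CX X)} (hchain : IsMaxChain (· ≤ ·) 𝒜) {c : CX X}
    (h : ∀ D ∈ 𝒜, c ≤ D ∨ D ≤ c) : c ∈ 𝒜 := by
  have hins : IsChain (· ≤ ·) (insert c 𝒜) := hchain.1.insert fun D hD _ => h D hD
  have := hchain.2 hins (Set.subset_insert c 𝒜)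
  rw [this]; exact Set.mem_insert _ _

/-- A set which is an "eventual limit" of a subfamily `S` (with respect to a directed
relation `r` on `S`) has each of its Vietoris-open neighbourhoods eventually containing
members of `S`. -/
lemma vietoris_eventual {S : Set (CX X)} (r : CX X → CX X → Prop)
    (htrans : ∀ {A B C}, A ∈ S → B ∈ S → C ∈ S → r A B → r B C → r A C)
    (hdir : ∀ A ∈ S, ∀ B ∈ S, ∃ C ∈ S, r A C ∧ r B C)
    (hne : S.Nonempty) {M : Set X}
    (h1 : ∀ U : Set X, IsOpen U → M ⊆ U → ∃ A ∈ S, ∀ B ∈ S, r A B → B.1 ⊆ U)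
    (h2 : ∀ U : Set X, IsOpen U → (M ∩ U).Nonempty →
      ∃ A ∈ S, ∀ B ∈ S, r A B → (B.1 ∩ U).Nonempty)
    {O : Set (Set X)} (hO : IsOpen[vietoris X] O) (hM : M ∈ O) :
    ∃ A ∈ S, ∀ B ∈ S, r A B → B.1 ∈ O := by
  have hO' : TopologicalSpace.GenerateOpen (vbase (X := X)) O := hO
  clear hO
  induction hO' with
  | basic s hs =>
    rcases hs with ⟨U, hU, rfl⟩ | ⟨U, hU, rfl⟩
    · exact h1 U hU hM
    · exact h2 U hU hM
  | univ =>
    obtain ⟨A, hA⟩ := hne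
    exact ⟨A, hA, fun _ _ _ => trivial⟩
  | inter s t _ _ ihs iht =>
    obtain ⟨A, hA, hAs⟩ := ihs hM.1
    obtain ⟨B, hB, hBt⟩ := iht hM.2
    obtain ⟨C, hC, hAC, hBC⟩ := hdir A hA B hB
    refine ⟨C, hC, fun D hD hCD => ?_⟩
    exact ⟨hAs D hD (htrans hA hC hD hAC hCD), hBt D hD (htrans hB hC hD hBC hCD)⟩
  | sUnion σ _ ih =>
    obtain ⟨t, htσ, hMt⟩ := hM
    obtain ⟨A, hA, h⟩ := ih t htσ hMt
    exact ⟨A, hA, fun B hB hr => ⟨t, htσ, h B hB hr⟩⟩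

/-- Suprema of nonempty subfamilies of a maximal chain belong to the chain, and are
approximated from below. -/
lemma sup_mem [T2Space X] {𝒜 : Set (CX X)} (hchain : IsMaxChain (· ≤ ·) 𝒜)
    {S : Set (CX X)} (hSA : S ⊆ 𝒜) (hne : S.Nonempty) :
    ∃ m : CX X, m ∈ 𝒜 ∧ (∀ A ∈ S, A ≤ m) ∧
      (∀ q : CX X, (∀ A ∈ S, A ≤ q) → m ≤ q) ∧
      (∀ O : Set (CX X), IsOpen O → m ∈ O → ∃ A ∈ S, A ∈ O) := by
  classical
  set M : Set X := closure (⋃ A ∈ S, A.1) with hMdef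
  have hsub : ∀ A ∈ S, A.1 ⊆ M := fun A hA =>
    (subset_biUnion_of_mem hA).trans subset_closure
  have hMcp : IsCompact M := isClosed_closure.isCompact
  have hMne : M.Nonempty := by
    obtain ⟨A, hA⟩ := hne
    obtain ⟨x, hx⟩ := A.2.2.1
    exact ⟨x, hsub A hA hx⟩
  have hMconn : IsPreconnected M := by
    apply IsPreconnected.closure
    have heq : (⋃ A ∈ S, A.1) = ⋃₀ (Subtype.val '' S) :=
      (Set.sUnion_image _ _).symm
    rw [heq]
    apply IsPreconnected.sUnion_directed
    · rintro _ ⟨A, hA, rfl⟩ _ ⟨B, hB, rfl⟩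
      rcases hchain.1.total (hSA hA) (hSA hB) with h | h
      · exact ⟨B.1, mem_image_of_mem _ hB, h, subset_rfl⟩
      · exact ⟨A.1, mem_image_of_mem _ hA, subset_rfl, h⟩
    · rintro _ ⟨A, _, rfl⟩
      exact A.2.2.isPreconnected
  have hlub : ∀ q : CX X, (∀ A ∈ S, A ≤ q) → M ⊆ q.1 := by
    intro q hq
    exact closure_minimal (iUnion₂_subset fun A hA => hq A hA) q.2.1.isClosed
  refine ⟨⟨M, hMcp, hMne, hMconn⟩, ?_, fun A hA => hsub A hA, fun q hq => hlub q hq, ?_⟩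
  · apply mem_of_comparable hchain
    intro D hD
    by_cases hall : ∀ A ∈ S, A ≤ D
    · exact Or.inl (hlub D hall)
    · push_neg at hall
      obtain ⟨A, hA, hAD⟩ := hall
      have : D ≤ A := (hchain.1.total hD (hSA hA)).resolve_right hAD
      exact Or.inr (this.trans (hsub A hA))
  · intro O hO hmO
    obtain ⟨t, ht, rfl⟩ := cx_isOpen_iff.mp hO
    have hMt : M ∈ t := hmO
    have key := vietoris_eventual (S := S) (fun A B => A ≤ B)
      (fun _ _ hC hab hbc => hab.trans hbc)
      (fun A hA B hB => by
        rcases hchain.1.total (hSA hA) (hSA hB) with h | h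
        · exact ⟨B, hB, h, le_refl B⟩
        · exact ⟨A, hA, le_refl A, h⟩)
      hne
      (fun U hU hMU => by
        obtain ⟨A0, hA0⟩ := hne
        exact ⟨A0, hA0, fun B hB _ => (hsub B hB).trans hMU⟩)
      (fun U hU hMU => by
        obtain ⟨x, hxM, hxU⟩ := hMU
        obtain ⟨y, hyU, hy⟩ := mem_closure_iff.mp hxM U hU hxU
        obtain ⟨A, hA, hyA⟩ := by
          simpa only [mem_iUnion, exists_prop] using hy
        exact ⟨A, hA, fun B hB hAB => ⟨y, hAB hyA, hyU⟩⟩)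
      ht hMt
    obtain ⟨A, hA, hAall⟩ := key
    exact ⟨A, hA, hAall A hA (le_refl A)⟩

/-- For a directed (by reverse inclusion) family of members of the chain, any open set
containing the intersection contains a member. -/
lemma inf_shrink {T : Set (CX X)} (hchain : IsChain (· ≤ ·) T) (hne : T.Nonempty)
    {W : Set X} (hW : IsOpen W) (hNW : (⋂ A ∈ T, A.1) ⊆ W) [T2Space X] :
    ∃ A ∈ T, A.1 ⊆ W := by
  haveI : Nonempty T := hne.to_subtype
  have hdir : Directed (· ⊇ ·) fun i : T => i.1.1 \ W := by
    intro i j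
    rcases hchain.total i.2 j.2 with h | h
    · exact ⟨i, subset_rfl, fun x hx => ⟨h hx.1, hx.2⟩⟩
    · exact ⟨j, fun x hx => ⟨h hx.1, hx.2⟩, subset_rfl⟩
  have hst : (Set.univ ∩ ⋂ i : T, (i.1.1 \ W)) = ∅ := by
    rw [Set.univ_inter]
    rw [Set.eq_empty_iff_forall_notMem]
    intro x hx
    have hx1 : x ∈ ⋂ A ∈ T, A.1 := by
      rw [Set.mem_iInter₂]
      intro A hA
      exact (Set.mem_iInter.mp hx ⟨A, hA⟩).1
    exact (Set.mem_iInter.mp hx (Classical.arbitrary T)).2 (hNW hx1)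
  obtain ⟨i, hi⟩ := isCompact_univ.elim_directed_family_closed
    (fun i : T => i.1.1 \ W) (fun i => i.1.2.1.isClosed.sdiff hW) hst hdir
  rw [Set.univ_inter, Set.diff_eq_empty] at hi
  exact ⟨i.1, i.2, hi⟩

/-- Infima of nonempty subfamilies of a maximal chain belong to the chain, and are
approximated from above. -/
lemma inf_mem [T2Space X] {𝒜 : Set (CX X)} (hchain : IsMaxChain (· ≤ ·) 𝒜)
    {T : Set (CX X)} (hTA : T ⊆ 𝒜) (hne : T.Nonempty) :
    ∃ n : CX X, n ∈ 𝒜 ∧ (∀ A ∈ T, n ≤ A) ∧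
      (∀ q : CX X, (∀ A ∈ T, q ≤ A) → q ≤ n) ∧
      (∀ O : Set (CX X), IsOpen O → n ∈ O → ∃ A ∈ T, A ∈ O) := by
  classical
  haveI : Nonempty T := hne.to_subtype
  have hchT : IsChain (· ≤ ·) T := hchain.1.mono hTA
  set N : Set X := ⋂ A ∈ T, A.1 with hNdef
  have hNsub : ∀ A ∈ T, N ⊆ A.1 := fun A hA => biInter_subset_of_mem hA
  have hNcl : IsClosed N := isClosed_biInter fun A _ => A.2.1.isClosed
  have hNcp : IsCompact N := hNcl.isCompact
  have hNeq : N = ⋂ i : T, i.1.1 := by rw [hNdef, Set.biInter_eq_iInter]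
  have hdirT : Directed (· ⊇ ·) fun i : T => i.1.1 := by
    intro i j
    rcases hchT.total i.2 j.2 with h | h
    · exact ⟨i, subset_rfl, h⟩
    · exact ⟨j, h, subset_rfl⟩
  have hNne : N.Nonempty := by
    rw [hNeq]
    exact IsCompact.nonempty_iInter_of_directed_nonempty_isCompact_isClosed
      (fun i : T => i.1.1) hdirT (fun i => i.1.2.2.1) (fun i => i.1.2.1)
      (fun i => i.1.2.1.isClosed)
  have hNconn : IsPreconnected N := by
    rw [isPreconnected_iff_subset_of_fully_disjoint_closed hNcl]
    intro u v hu hv hcov hdisj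
    by_cases h1 : (N ∩ u).Nonempty
    · by_cases h2 : (N ∩ v).Nonempty
      · exfalso
        obtain ⟨U, V, hUo, hVo, hKU, hKV, hUV⟩ :=
          SeparatedNhds.of_isCompact_isCompact (hNcp.inter_right hu) (hNcp.inter_right hv)
            (hdisj.mono inter_subset_right inter_subset_right)
        have hNUV : N ⊆ U ∪ V := by
          intro x hx
          rcases hcov hx with h | h
          · exact Or.inl (hKU ⟨hx, h⟩)
          · exact Or.inr (hKV ⟨hx, h⟩)
        obtain ⟨A, hAT, hAW⟩ := inf_shrink hchT hne (hUo.union hVo) hNUV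
        have := A.2.2.isPreconnected U V hUo hVo hAW
          (h1.mono fun x hx => ⟨hNsub A hAT hx.1, hKU hx⟩)
          (h2.mono fun x hx => ⟨hNsub A hAT hx.1, hKV hx⟩)
        rw [hUV.inter_eq] at this
        simp at this
      · left
        intro x hx
        rcases hcov hx with h | h
        · exact h
        · exact absurd ⟨x, hx, h⟩ h2
    · right
      intro x hx
      rcases hcov hx with h | h
      · exact absurd ⟨x, hx, h⟩ h1
      · exact h
  have hglb : ∀ q : CX X, (∀ A ∈ T, q ≤ A) → q.1 ⊆ N := by
    intro q hq
    exact subset_iInter₂ fun A hA => hq A hA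
  refine ⟨⟨N, hNcp, hNne, hNconn⟩, ?_, fun A hA => hNsub A hA, fun q hq => hglb q hq, ?_⟩
  · apply mem_of_comparable hchain
    intro D hD
    by_cases hall : ∀ A ∈ T, D ≤ A
    · exact Or.inr (hglb D hall)
    · push_neg at hall
      obtain ⟨A, hA, hDA⟩ := hall
      have : A ≤ D := (hchain.1.total (hTA hA) hD).resolve_right hDA
      exact Or.inl ((hNsub A hA).trans this)
  · intro O hO hnO
    obtain ⟨t, ht, rfl⟩ := cx_isOpen_iff.mp hO
    have hNt : N ∈ t := hnO
    have key := vietoris_eventual (S := T) (fun A B => B ≤ A)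
      (fun _ _ hC hab hbc => hbc.trans hab)
      (fun A hA B hB => by
        rcases hchT.total hA hB with h | h
        · exact ⟨A, hA, le_refl A, h⟩
        · exact ⟨B, hB, h, le_refl B⟩)
      hne
      (fun U hU hNU => by
        obtain ⟨A, hA, hAU⟩ := inf_shrink hchT hne hU hNU
        exact ⟨A, hA, fun B hB hBA => (cx_le_iff.mp hBA).trans hAU⟩)
      (fun U hU hNU => by
        obtain ⟨A0, hA0⟩ := hne
        obtain ⟨x, hxN, hxU⟩ := hNU
        exact ⟨A0, hA0, fun B hB _ => ⟨x, hNsub B hB hxN, hxU⟩⟩)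
      ht hNt
    obtain ⟨A, hA, hAall⟩ := key
    exact ⟨A, hA, hAall A hA (le_refl A)⟩

/-- The bridging lemma (a consequence of the boundary bumping phenomenon): between two
distinct nested subcontinua there is a third one. -/
lemma bridge [T2Space X] {A B : Set X} (hAcp : IsCompact A) (hAcn : IsConnected A)
    (hBcp : IsCompact B) (hBcn : IsConnected B) (hAB : A ⊆ B) (hne : A ≠ B) :
    ∃ C : Set X, IsCompact C ∧ IsConnected C ∧ A ⊆ C ∧ C ⊆ B ∧ A ≠ C ∧ C ≠ B := by
  classical
  obtain ⟨b, hbB, hbA⟩ := Set.exists_of_ssubset (ssubset_of_subset_of_ne hAB hne)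
  obtain ⟨W, U, hWo, hUo, hbW, hAU, hWU⟩ :=
    SeparatedNhds.of_isCompact_isCompact isCompact_singleton hAcp
      (Set.disjoint_singleton_left.mpr hbA)
  have hbW' : b ∈ W := hbW rfl
  set K : Set X := B ∩ Wᶜ with hKdef
  have hUW : U ⊆ Wᶜ := fun x hx hxW => hWU.ne_of_mem hxW hx rfl
  have hKcl : IsClosed K := hBcp.isClosed.inter hWo.isClosed_compl
  have hKcp : IsCompact K := hBcp.inter_right hWo.isClosed_compl
  have hAK : A ⊆ K := fun x hx => ⟨hAB hx, hUW (hAU hx)⟩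
  have hKB : K ⊆ B := inter_subset_left
  have hbK : b ∉ K := fun h => h.2 hbW'
  obtain ⟨a0, ha0⟩ := hAcn.1
  have ha0K : a0 ∈ K := hAK ha0
  set C : Set X := connectedComponentIn K a0 with hCdef
  have hCK : C ⊆ K := connectedComponentIn_subset K a0
  have hAC : A ⊆ C := hAcn.isPreconnected.subset_connectedComponentIn ha0 hAK
  have ha0C : a0 ∈ C := mem_connectedComponentIn ha0K
  haveI : CompactSpace K := isCompact_iff_compactSpace.mp hKcp
  set a : K := ⟨a0, ha0K⟩ with hadef
  have hCeq : C = Subtype.val '' connectedComponent a :=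
    connectedComponentIn_eq_image ha0K
  -- C is a continuum
  have hCcl : IsClosed C := by
    rw [hCeq]
    exact (isClosed_connectedComponent.isCompact.image continuous_subtype_val).isClosed
  have hCcp : IsCompact C := hCcl.isCompact
  have hCcn : IsConnected C := isConnected_connectedComponentIn_iff.mpr ha0K
  -- C meets the closure of W
  have hCW : (C ∩ closure W).Nonempty := by
    by_contra hCWe
    rw [Set.not_nonempty_iff_eq_empty] at hCWe
    set E : Set K := Subtype.val ⁻¹' closure W with hEdef
    have hEcl : IsClosed E := isClosed_closure.preimage continuous_subtype_val
    have hEcp : IsCompact E := hEcl.isCompact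
    have hinter : (E ∩ ⋂ p : { s : Set K // IsClopen s ∧ a ∈ s }, p.1) = ∅ := by
      rw [← connectedComponent_eq_iInter_isClopen a]
      rw [Set.eq_empty_iff_forall_notMem]
      rintro x ⟨hxE, hxC⟩
      have : (x : X) ∈ C ∩ closure W := ⟨hCeq ▸ ⟨x, hxC, rfl⟩, hxE⟩
      rw [hCWe] at this
      exact this
    haveI : Nonempty { s : Set K // IsClopen s ∧ a ∈ s } :=
      ⟨⟨Set.univ, isClopen_univ, Set.mem_univ a⟩⟩
    have hdir : Directed (· ⊇ ·) fun p : { s : Set K // IsClopen s ∧ a ∈ s } => p.1 := by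
      intro p q
      exact ⟨⟨p.1 ∩ q.1, p.2.1.inter q.2.1, p.2.2, q.2.2⟩, inter_subset_left,
        inter_subset_right⟩
    obtain ⟨p, hp⟩ := hEcp.elim_directed_family_closed
      (fun p : { s : Set K // IsClopen s ∧ a ∈ s } => p.1)
      (fun p => p.2.1.isClosed) (by rw [Set.inter_comm] at hinter ⊢; exact hinter) hdir
    -- p.1 is a clopen subset of K containing a and disjoint from closure W
    set D : Set X := Subtype.val '' p.1 with hDdef
    have hDK : D ⊆ K := by rintro _ ⟨y, _, rfl⟩; exact y.2
    have hDclW : D ∩ closure W = ∅ := by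
      rw [Set.eq_empty_iff_forall_notMem]
      rintro x ⟨⟨y, hy, rfl⟩, hx2⟩
      have : y ∈ E ∩ p.1 := ⟨hx2, hy⟩
      rw [hp] at this
      exact this
    have hDclX : IsClosed D :=
      ((p.2.1.isClosed.isCompact).image continuous_subtype_val).isClosed
    obtain ⟨O, hOo, hOD⟩ := isOpen_induced_iff.mp p.2.1.isOpen
    have hDeq : D = O ∩ K := by
      rw [hDdef, ← hOD]
      ext x
      constructor
      · rintro ⟨y, hy, rfl⟩; exact ⟨hy, y.2⟩
      · rintro ⟨hx1, hx2⟩; exact ⟨⟨x, hx2⟩, hx1, rfl⟩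
    -- now get a clopen subset of B
    haveI : PreconnectedSpace B := Subtype.preconnectedSpace hBcn.isPreconnected
    set D' : Set B := Subtype.val ⁻¹' D with hD'def
    have hD'eq : D' = Subtype.val ⁻¹' (O ∩ (closure W)ᶜ) := by
      ext x
      simp only [hD'def, Set.mem_preimage, Set.mem_inter_iff, Set.mem_compl_iff]
      constructor
      · intro hx
        refine ⟨(hDeq ▸ hx).1, fun hcl => ?_⟩
        have : (x : X) ∈ D ∩ closure W := ⟨hx, hcl⟩
        rw [hDclW] at this; exact this
      · rintro ⟨hxO, hxW⟩
        have hxK : (x : X) ∈ K := ⟨x.2, fun hW => hxW (subset_closure hW)⟩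
        rw [hDeq]; exact ⟨hxO, hxK⟩
    have hD'clopen : IsClopen D' := by
      constructor
      · exact hDclX.preimage continuous_subtype_val
      · rw [hD'eq]
        exact (hOo.inter isClosed_closure.isOpen_compl).preimage continuous_subtype_val
    rcases isClopen_iff.mp hD'clopen with h | h
    · have : (⟨a0, hAB ha0⟩ : B) ∈ D' := by
        show a0 ∈ D
        exact ⟨a, p.2.2, rfl⟩
      rw [h] at this
      exact this
    · have : (⟨b, hbB⟩ : B) ∈ D' := h ▸ Set.mem_univ _
      have hbD : b ∈ D := this
      exact hbK (hDK hbD)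
  -- conclude
  obtain ⟨c, hcC, hcW⟩ := hCW
  have hcA : c ∉ A := by
    intro hcA
    have : c ∈ U := hAU hcA
    have hdisj : Disjoint (closure W) U := hWU.closure_left hUo
    exact hdisj.ne_of_mem hcW this rfl
  refine ⟨C, hCcp, hCcn, hAC, hCK.trans hKB, ?_, ?_⟩
  · intro h; rw [← h] at hcC; exact hcA hcC
  · intro h; rw [h] at hCK; exact hbK (hCK hbB)

/-- Auxiliary lemma for connectedness: a separation of a maximal closed chain leads to a
contradiction. -/
lemma no_gap_aux [T2Space X] {𝒜 P Q : Set (CX X)} (hchain : IsMaxChain (· ≤ ·) 𝒜)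
    (hPc : IsClosed P) (hQc : IsClosed Q) (hPA : P ⊆ 𝒜) (hQA : Q ⊆ 𝒜)
    (hPQ : P ∩ Q = ∅) (hunion : 𝒜 ⊆ P ∪ Q) {p q : CX X} (hp : p ∈ P) (hq : q ∈ Q)
    (hpq : p ≤ q) : False := by
  classical
  -- the supremum of the elements of P below q
  set S : Set (CX X) := {A ∈ P | A ≤ q} with hSdef
  have hSP : S ⊆ P := fun A hA => hA.1
  have hSA : S ⊆ 𝒜 := hSP.trans hPA
  have hSne : S.Nonempty := ⟨p, hp, hpq⟩
  obtain ⟨m, hmA, hmub, hmlub, hmapprox⟩ := sup_mem hchain hSA hSne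
  have hmq : m ≤ q := hmlub q fun A hA => hA.2
  have hmP : m ∈ P := by
    by_contra hmP
    obtain ⟨A, hAS, hAP⟩ := hmapprox Pᶜ hPc.isOpen_compl hmP
    exact hAP (hSP hAS)
  -- the infimum of the elements of Q above m
  set T : Set (CX X) := {B ∈ Q | m ≤ B} with hTdef
  have hTQ : T ⊆ Q := fun B hB => hB.1
  have hTA : T ⊆ 𝒜 := hTQ.trans hQA
  have hTne : T.Nonempty := ⟨q, hq, hmq⟩
  obtain ⟨n, hnA, hnlb, hnglb, hnapprox⟩ := inf_mem hchain hTA hTne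
  have hmn : m ≤ n := hnglb m fun B hB => hB.2
  have hnQ : n ∈ Q := by
    by_contra hnQ
    obtain ⟨B, hBT, hBQ⟩ := hnapprox Qᶜ hQc.isOpen_compl hnQ
    exact hBQ (hTQ hBT)
  have hmnne : m ≠ n := by
    intro h
    have : m ∈ P ∩ Q := ⟨hmP, h ▸ hnQ⟩
    rw [hPQ] at this; exact this
  -- no element of the chain lies strictly between m and n
  have hbetween : ∀ D ∈ 𝒜, m ≤ D → D ≤ n → D = m ∨ D = n := by
    intro D hD hmD hDn
    rcases hunion hD with hDP | hDQ
    · left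
      have hDq : D ≤ q := le_trans hDn (hnlb q ⟨hq, hmq⟩)
      have : D ∈ S := ⟨hDP, hDq⟩
      exact le_antisymm (hmub D this) hmD
    · right
      have : D ∈ T := ⟨hDQ, hmD⟩
      exact le_antisymm hDn (hnlb D this)
  -- use the bridge lemma to contradict maximality
  obtain ⟨C, hCcp, hCcn, hmC, hCn, hCne1, hCne2⟩ :=
    bridge m.2.1 m.2.2 n.2.1 n.2.2 (cx_le_iff.mp hmn) (fun h => hmnne (Subtype.ext h))
  set c : CX X := ⟨C, hCcp, hCcn⟩ with hcdef
  have hmc : m ≤ c := hmC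
  have hcn : c ≤ n := hCn
  have hcm : c ≠ m := fun h => hCne1 (congrArg Subtype.val h).symm
  have hcn' : c ≠ n := fun h => hCne2 (congrArg Subtype.val h)
  have hcA : c ∈ 𝒜 := by
    apply mem_of_comparable hchain
    intro D hD
    rcases hchain.1.total hD hmA with hDm | hmD
    · exact Or.inr (hDm.trans hmc)
    · rcases hchain.1.total hD hnA with hDn | hnD
      · rcases hbetween D hD hmD hDn with h | h
        · exact Or.inr (h ▸ hmc)
        · exact Or.inl (h ▸ hcn)
      · exact Or.inl (hcn.trans hnD)
  rcases hbetween c hcA hmc hcn with h | h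
  · exact hcm h
  · exact hcn' h

/-- Every maximal chain of subcontinua from a singleton to the whole space that is
closed in the Vietoris topology is an order arc: it is compact and connected. -/
theorem stmt16 [T2Space X]
    (𝒜 : Set (CX X)) (hchain : IsMaxChain (· ≤ ·) 𝒜)
    (hsgl : ∃ x : X, sgl X x ∈ 𝒜) (htop : whole X ∈ 𝒜)
    (hclosed : IsClosed 𝒜) :
    IsCompact 𝒜 ∧ IsConnected 𝒜 := by
  classical
  constructor
  · -- Compactness
    rw [isCompact_iff_ultrafilter_le_nhds]
    intro F hF
    have h𝒜F : 𝒜 ∈ F := le_principal_iff.mp hF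
    set G : Ultrafilter (Set X) := F.map Subtype.val with hGdef
    have him : Subtype.val '' 𝒜 ∈ G := by
      rw [hGdef]
      show (Subtype.val : CX X → Set X) ⁻¹' (Subtype.val '' 𝒜) ∈ F
      exact mem_of_superset h𝒜F (subset_preimage_image _ _)
    set L : Set X := {x | ∀ U : Set X, IsOpen U → x ∈ U →
      {B : Set X | (B ∩ U).Nonempty} ∈ G} with hLdef
    have key1 : ∀ U : Set X, IsOpen U → L ⊆ U → {B : Set X | B ⊆ U} ∈ G := by
      intro U hU hLU
      have hchoice : ∀ x : X, x ∈ Uᶜ → ∃ V : Set X, IsOpen V ∧ x ∈ V ∧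
          {B : Set X | B ∩ V = ∅} ∈ G := by
        intro x hx
        have hxL : x ∉ L := fun h => hx (hLU h)
        rw [hLdef, Set.mem_setOf_eq] at hxL
        push_neg at hxL
        obtain ⟨V, hVo, hxV, hVG⟩ := hxL
        refine ⟨V, hVo, hxV, ?_⟩
        have hc := (Ultrafilter.compl_mem_iff_notMem (f := G)).mpr hVG
        have hceq : {B : Set X | (B ∩ V).Nonempty}ᶜ = {B : Set X | B ∩ V = ∅} := by
          ext B
          simp [Set.not_nonempty_iff_eq_empty]
        rwa [hceq] at hc
      choose! V hVo hxV hVG using hchoice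
      have hUc : IsCompact Uᶜ := hU.isClosed_compl.isCompact
      have hcov : Uᶜ ⊆ ⋃ x ∈ Uᶜ, V x := fun x hx =>
        Set.mem_biUnion hx (hxV x hx)
      obtain ⟨tf, htfsub, htffin, htfcov⟩ :=
        hUc.elim_finite_subcover_image (fun x hx => hVo x hx) hcov
      have hInt : (⋂ x ∈ tf, {B : Set X | B ∩ V x = ∅}) ∈ G :=
        (Filter.biInter_mem htffin).mpr fun x hx => hVG x (htfsub hx)
      apply mem_of_superset hInt
      intro B hB
      simp only [Set.mem_iInter, Set.mem_setOf_eq] at hB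
      intro y hy
      by_contra hyU
      have : y ∈ ⋃ x ∈ tf, V x := htfcov hyU
      obtain ⟨x, hx, hyV⟩ := by
        simpa only [mem_iUnion, exists_prop] using this
      have : y ∈ B ∩ V x := ⟨hy, hyV⟩
      rw [hB x hx] at this
      exact this
    have key2 : ∀ U : Set X, IsOpen U → (L ∩ U).Nonempty →
        {B : Set X | (B ∩ U).Nonempty} ∈ G := by
      rintro U hU ⟨x, hxL, hxU⟩
      exact hxL U hU hxU
    have hLcl : IsClosed L := by
      rw [← isOpen_compl_iff, isOpen_iff_forall_mem_open]
      intro x hx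
      rw [Set.mem_compl_iff, hLdef, Set.mem_setOf_eq] at hx
      push_neg at hx
      obtain ⟨U, hUo, hxU, hUG⟩ := hx
      refine ⟨U, ?_, hUo, hxU⟩
      intro y hy hyL
      exact hUG (hyL U hUo hy)
    have hLcp : IsCompact L := hLcl.isCompact
    have hLne : L.Nonempty := by
      by_contra hLe
      rw [Set.not_nonempty_iff_eq_empty] at hLe
      have h0 : {B : Set X | B ⊆ (∅ : Set X)} ∈ G := key1 ∅ isOpen_empty (by simp [hLe])
      have := (G : Filter (Set X)).inter_sets h0 him
      obtain ⟨B, hB1, A, hA, rfl⟩ := Filter.nonempty_of_mem this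
      obtain ⟨x, hx⟩ := A.2.2.1
      exact (hB1 hx)
    have hLconn : IsPreconnected L := by
      rw [isPreconnected_iff_subset_of_fully_disjoint_closed hLcl]
      intro u v hu hv hcov hdisj
      by_cases h1 : (L ∩ u).Nonempty
      · by_cases h2 : (L ∩ v).Nonempty
        · exfalso
          obtain ⟨U, V, hUo, hVo, hKU, hKV, hUV⟩ :=
            SeparatedNhds.of_isCompact_isCompact (hLcp.inter_right hu) (hLcp.inter_right hv)
              (hdisj.mono inter_subset_right inter_subset_right)
          have hLUV : L ⊆ U ∪ V := by
            intro x hx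
            rcases hcov hx with h | h
            · exact Or.inl (hKU ⟨hx, h⟩)
            · exact Or.inr (hKV ⟨hx, h⟩)
          have g1 : {B : Set X | B ⊆ U ∪ V} ∈ G := key1 _ (hUo.union hVo) hLUV
          have g2 : {B : Set X | (B ∩ U).Nonempty} ∈ G :=
            key2 U hUo (h1.mono fun x hx => ⟨hx.1, hKU hx⟩)
          have g3 : {B : Set X | (B ∩ V).Nonempty} ∈ G :=
            key2 V hVo (h2.mono fun x hx => ⟨hx.1, hKV hx⟩)
          have hall := (G : Filter (Set X)).inter_sets
            ((G : Filter (Set X)).inter_sets g1 g2) ((G : Filter (Set X)).inter_sets g3 him)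
          obtain ⟨B, ⟨⟨hB1, hB2⟩, hB3, A, hA, rfl⟩⟩ := Filter.nonempty_of_mem hall
          have := A.2.2.isPreconnected U V hUo hVo hB1 hB2 hB3
          rw [hUV.inter_eq] at this
          simp at this
        · left
          intro x hx
          rcases hcov hx with h | h
          · exact h
          · exact absurd ⟨x, hx, h⟩ h2
      · right
        intro x hx
        rcases hcov hx with h | h
        · exact absurd ⟨x, hx, h⟩ h1
        · exact h
    -- convergence of G to L in the Vietoris topology
    have hconv : (G : Filter (Set X)) ≤ @nhds _ (vietoris X) L := by
      rw [vietoris_eq, TopologicalSpace.nhds_generateFrom]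
      refine le_iInf₂ fun s hs => ?_
      obtain ⟨hLs, hsb⟩ := hs
      rw [le_principal_iff]
      rcases hsb with ⟨U, hU, rfl⟩ | ⟨U, hU, rfl⟩
      · exact key1 U hU hLs
      · exact key2 U hU hLs
    set Lc : CX X := ⟨L, hLcp, hLne, hLconn⟩ with hLcdef
    have hFconv : (F : Filter (CX X)) ≤ @nhds (CX X) _ Lc := by
      have h1 : (F : Filter (CX X)) ≤ comap Subtype.val (@nhds _ (vietoris X) L) := by
        exact Filter.map_le_iff_le_comap.mp hconv
      have h2 : @nhds (CX X) _ Lc = comap Subtype.val (@nhds _ (vietoris X) L) :=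
        @nhds_induced (Set X) (CX X) (vietoris X) Subtype.val Lc
      rw [h2]
      exact h1
    have hLcA : Lc ∈ 𝒜 := by
      have : Lc ∈ closure 𝒜 := mem_closure_iff_ultrafilter.mpr ⟨F, h𝒜F, hFconv⟩
      rwa [hclosed.closure_eq] at this
    exact ⟨Lc, hLcA, hFconv⟩
  · -- Connectedness
    refine ⟨⟨whole X, htop⟩, ?_⟩
    intro u v hu hv hcov hne1 hne2
    by_contra hcontra
    rw [Set.not_nonempty_iff_eq_empty] at hcontra
    set P : Set (CX X) := 𝒜 \ v with hPdef
    set Q : Set (CX X) := 𝒜 \ u with hQdef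
    have hPc : IsClosed P := hclosed.sdiff hv
    have hQc : IsClosed Q := hclosed.sdiff hu
    have hPA : P ⊆ 𝒜 := diff_subset
    have hQA : Q ⊆ 𝒜 := diff_subset
    have hPQ : P ∩ Q = ∅ := by
      rw [Set.eq_empty_iff_forall_notMem]
      rintro A ⟨⟨hA1, hA2⟩, _, hA4⟩
      rcases hcov hA1 with h | h
      · exact hA4 h
      · exact hA2 h
    have hunion : 𝒜 ⊆ P ∪ Q := by
      intro A hA
      by_cases hAu : A ∈ u
      · left
        refine ⟨hA, fun hAv => ?_⟩
        have : A ∈ 𝒜 ∩ (u ∩ v) := ⟨hA, hAu, hAv⟩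
        rw [hcontra] at this
        exact this
      · right
        exact ⟨hA, hAu⟩
    obtain ⟨p, hpA, hpu⟩ := hne1
    obtain ⟨q, hqA, hqv⟩ := hne2
    have hpP : p ∈ P := by
      refine ⟨hpA, fun hpv => ?_⟩
      have : p ∈ 𝒜 ∩ (u ∩ v) := ⟨hpA, hpu, hpv⟩
      rw [hcontra] at this
      exact this
    have hqQ : q ∈ Q := by
      refine ⟨hqA, fun hqu => ?_⟩
      have : q ∈ 𝒜 ∩ (u ∩ v) := ⟨hqA, hqu, hqv⟩
      rw [hcontra] at this
      exact this
    rcases hchain.1.total hpA hqA with h | h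
    · exact no_gap_aux hchain hPc hQc hPA hQA hPQ hunion hpP hqQ h
    · exact no_gap_aux hchain hQc hPc hQA hPA (by rw [Set.inter_comm]; exact hPQ)
        (fun A hA => (hunion hA).symm) hqQ hpP h
end
end
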